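/- In dimension d ≥ 2, the periodic bilinear X^{s,b} estimate ‖u₁u₂‖_{X^+_{s,b'}} ≤ c‖u₁‖_{X^+_{s,b}}‖u₂‖_{X^+_{s,b}} fails for every s < 0 and all b, b' ∈ ℝ. Concretely: fixing orthonormal e₁, e₂ ∈ ℝ^d and setting f_1^{(n)}(ξ,τ) = δ_{ξ, n e₁} χ_{[-1,1]}(τ + n²), f_2^{(n)}(ξ,τ) = δ_{ξ, n e₂} χ_{[-1,1]}(τ + n²), the convolution satisfies (f_1^{(n)} * f_2^{(n)})(ξ,τ) ≥ δ_{ξ, n(e₁+e₂)} χ_{[-1,1]}(τ + 2n²), which forces the quantity n^{-s} to remain bounded in n, a contradiction for s < 0. -/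

import Mathlib

open MeasureTheory
open scoped ENNReal BigOperators

/-- Japanese bracket. -/
noncomputable def jb (x : ℝ) : ℝ := Real.sqrt (1 + x ^ 2)

/-- `|ξ|²` for `ξ ∈ ℤ^d`. -/
def nsq {d : ℕ} (ξ : Fin d → ℤ) : ℝ := ∑ i, ((ξ i : ℝ)) ^ 2

/-- Japanese bracket of `ξ ∈ ℤ^d`. -/
noncomputable def jbZ {d : ℕ} (ξ : Fin d → ℤ) : ℝ := Real.sqrt (1 + nsq ξ)

/-- The `X^+_{s,b}` norm on the (space-time) Fourier side: counting measure in `ξ ∈ ℤ^d`,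
Lebesgue measure in `τ`, with weight `⟨ξ⟩^s ⟨τ+|ξ|²⟩^b`. -/
noncomputable def Xnorm (d : ℕ) (s b : ℝ) (F : (Fin d → ℤ) × ℝ → ℝ≥0∞) : ℝ≥0∞ :=
  (∑' ξ : Fin d → ℤ, ∫⁻ τ : ℝ,
      ENNReal.ofReal (jbZ ξ ^ (2 * s) * jb (τ + nsq ξ) ^ (2 * b)) * F (ξ, τ) ^ 2) ^
    ((1 : ℝ) / 2)

/-- Convolution on `ℤ^d × ℝ`, corresponding to the product `u₁u₂` on the Fourier side. -/
noncomputable def conv2 (d : ℕ) (F G : (Fin d → ℤ) × ℝ → ℝ≥0∞) :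
    (Fin d → ℤ) × ℝ → ℝ≥0∞ := fun p =>
  ∑' ξ₁ : Fin d → ℤ, ∫⁻ τ₁ : ℝ, F (ξ₁, τ₁) * G (p.1 - ξ₁, p.2 - τ₁)

/-- First standard basis vector of `ℤ^d`. -/
def e₀ (d : ℕ) : Fin d → ℤ := fun i => if i.val = 0 then 1 else 0

/-- Second standard basis vector of `ℤ^d`. -/
def e₁ (d : ℕ) : Fin d → ℤ := fun i => if i.val = 1 then 1 else 0

/-- The counterexample sequence `f₁^{(n)}(ξ,τ) = δ_{ξ, n e₀} χ_{[-1,1]}(τ + n²)`,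
for a general direction `e`. -/
noncomputable def fex (d n : ℕ) (e : Fin d → ℤ) : (Fin d → ℤ) × ℝ → ℝ≥0∞ := fun p =>
  (if p.1 = (n : ℤ) • e then 1 else 0) *
    (if p.2 + (n : ℝ) ^ 2 ∈ Set.Icc (-1 : ℝ) 1 then 1 else 0)

/-! ### Auxiliary lemmas -/

lemma nsq_nonneg {d : ℕ} (ξ : Fin d → ℤ) : 0 ≤ nsq ξ :=
  Finset.sum_nonneg fun i _ => sq_nonneg _

lemma nsq_e₀ (d : ℕ) (hd : 1 ≤ d) (n : ℤ) : nsq (n • e₀ d) = (n : ℝ)^2 := by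
  unfold nsq e₀
  rw [Finset.sum_eq_single ⟨0, hd⟩]
  · simp
  · intro i _ hi
    have : i.val ≠ 0 := fun h => hi (Fin.ext h)
    simp [this]
  · simp

lemma nsq_e₁ (d : ℕ) (hd : 2 ≤ d) (n : ℤ) : nsq (n • e₁ d) = (n : ℝ)^2 := by
  unfold nsq e₁
  rw [Finset.sum_eq_single ⟨1, hd⟩]
  · simp
  · intro i _ hi
    have : i.val ≠ 1 := fun h => hi (Fin.ext h)
    simp [this]
  · simp

lemma nsq_sum (d : ℕ) (hd : 2 ≤ d) (n : ℤ) :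
    nsq (n • (e₀ d + e₁ d)) = 2 * (n : ℝ)^2 := by
  have h : nsq (n • (e₀ d + e₁ d)) = nsq (n • e₀ d) + nsq (n • e₁ d) := by
    unfold nsq
    rw [← Finset.sum_add_distrib]
    apply Finset.sum_congr rfl
    intro i _
    have : (e₀ d i) * (e₁ d i) = 0 := by
      unfold e₀ e₁
      rcases eq_or_ne i.val 0 with h0 | h0 <;> simp [h0]
    simp only [Pi.add_apply, Pi.smul_apply, smul_eq_mul]
    push_cast
    have : ((e₀ d i : ℝ)) * (e₁ d i : ℝ) = 0 := by exact_mod_cast this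
    ring_nf
    nlinarith [this]
  rw [h, nsq_e₀ d (by omega) n, nsq_e₁ d hd n]; ring

lemma jbZ_rpow {d : ℕ} (ξ : Fin d → ℤ) (s : ℝ) : jbZ ξ ^ (2*s) = (1 + nsq ξ) ^ s := by
  have h0 : (0:ℝ) ≤ 1 + nsq ξ := by linarith [nsq_nonneg ξ]
  rw [jbZ, Real.sqrt_eq_rpow, ← Real.rpow_mul h0]
  congr 1; ring

lemma jb_rpow (x : ℝ) (b : ℝ) : jb x ^ (2*b) = (1 + x^2) ^ b := by
  have h0 : (0:ℝ) ≤ 1 + x^2 := by positivity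
  rw [jb, Real.sqrt_eq_rpow, ← Real.rpow_mul h0]
  congr 1; ring

lemma jb_upper {u : ℝ} (hu : u ∈ Set.Icc (-1:ℝ) 1) (b : ℝ) :
    (1 + u^2) ^ b ≤ (2:ℝ) ^ |b| := by
  obtain ⟨h1, h2⟩ := hu
  have hb1 : (1:ℝ) ≤ 1 + u^2 := by nlinarith
  have hb2 : 1 + u^2 ≤ (2:ℝ) := by nlinarith
  rcases le_total 0 b with hb | hb
  · rw [abs_of_nonneg hb]
    exact Real.rpow_le_rpow (by linarith) hb2 hb
  · calc (1+u^2)^b ≤ 1 := Real.rpow_le_one_of_one_le_of_nonpos hb1 hb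
      _ = (2:ℝ)^(0:ℝ) := (Real.rpow_zero 2).symm
      _ ≤ (2:ℝ)^|b| := Real.rpow_le_rpow_of_exponent_le one_le_two (abs_nonneg b)

lemma jb_lower {u : ℝ} (hu : u ∈ Set.Icc (-1:ℝ) 1) (b : ℝ) :
    (2:ℝ) ^ (-|b|) ≤ (1 + u^2) ^ b := by
  obtain ⟨h1, h2⟩ := hu
  have hb1 : (1:ℝ) ≤ 1 + u^2 := by nlinarith
  have hb2 : 1 + u^2 ≤ (2:ℝ) := by nlinarith
  rcases le_total 0 b with hb | hb
  · calc (2:ℝ)^(-|b|) ≤ (2:ℝ)^(0:ℝ) :=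
        Real.rpow_le_rpow_of_exponent_le one_le_two (by simpa using abs_nonneg b)
      _ = 1 := Real.rpow_zero 2
      _ ≤ (1+u^2)^b := Real.one_le_rpow hb1 hb
  · rw [abs_of_nonpos hb, neg_neg]
    exact Real.rpow_le_rpow_of_nonpos (by linarith) hb2 hb

/-- The basic bump function `δ_{ξ,v} χ_{[-1,1]}(τ + |v|²)`. -/
noncomputable def bump (d : ℕ) (v : Fin d → ℤ) : (Fin d → ℤ) × ℝ → ℝ≥0∞ := fun p =>
  (if p.1 = v then 1 else 0) * (if p.2 + nsq v ∈ Set.Icc (-1:ℝ) 1 then 1 else 0)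

lemma tsum_bump (d : ℕ) (s b : ℝ) (v : Fin d → ℤ) :
    (∑' ξ : Fin d → ℤ, ∫⁻ τ : ℝ,
      ENNReal.ofReal (jbZ ξ ^ (2 * s) * jb (τ + nsq ξ) ^ (2 * b)) * (bump d v (ξ, τ)) ^ 2)
    = ∫⁻ τ : ℝ, ENNReal.ofReal ((1 + nsq v) ^ s * (1 + (τ + nsq v)^2) ^ b) *
        (if τ + nsq v ∈ Set.Icc (-1:ℝ) 1 then 1 else 0) := by
  rw [tsum_eq_single v]
  · apply lintegral_congr
    intro τ
    rw [jbZ_rpow, jb_rpow]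
    simp only [bump]
    split_ifs with h <;> simp
  · intro ξ hξ
    simp [bump, hξ]

lemma vol2 (K : ℝ) : volume (Set.Icc (-1 - K) (1 - K)) = 2 := by
  rw [Real.volume_Icc, show (1:ℝ) - K - (-1-K) = 2 by ring]
  exact ENNReal.ofReal_ofNat 2

lemma Xnorm_bump_le (d : ℕ) (s b : ℝ) (v : Fin d → ℤ) :
    Xnorm d s b (bump d v) ≤
      (ENNReal.ofReal ((1 + nsq v) ^ s * 2 ^ |b|) * 2) ^ ((1:ℝ)/2) := by
  set K := nsq v with hK
  have hK0 : 0 ≤ K := nsq_nonneg v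
  apply ENNReal.rpow_le_rpow _ (by norm_num)
  rw [tsum_bump]
  set C : ℝ≥0∞ := ENNReal.ofReal ((1 + K) ^ s * 2 ^ |b|) with hC
  calc (∫⁻ τ : ℝ, ENNReal.ofReal ((1 + K) ^ s * (1 + (τ + K)^2) ^ b) *
        (if τ + K ∈ Set.Icc (-1:ℝ) 1 then 1 else 0))
      ≤ ∫⁻ τ : ℝ, (Set.Icc (-1 - K) (1 - K)).indicator (fun _ => C) τ := by
        apply lintegral_mono
        intro τ
        by_cases h : τ + K ∈ Set.Icc (-1:ℝ) 1
        · have hτ : τ ∈ Set.Icc (-1 - K) (1 - K) := by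
            obtain ⟨h1, h2⟩ := h; constructor <;> linarith
          simp only [Set.indicator_of_mem hτ, if_pos h, mul_one, hC]
          apply ENNReal.ofReal_le_ofReal
          exact mul_le_mul_of_nonneg_left (jb_upper h b) (Real.rpow_nonneg (by linarith) s)
        · simp only [if_neg h, mul_zero]
          exact zero_le
    _ = C * 2 := by
        rw [lintegral_indicator measurableSet_Icc _, setLIntegral_const, vol2]

lemma Xnorm_bump_ge (d : ℕ) (s b : ℝ) (v : Fin d → ℤ) :
    (ENNReal.ofReal ((1 + nsq v) ^ s * 2 ^ (-|b|)) * 2) ^ ((1:ℝ)/2) ≤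
      Xnorm d s b (bump d v) := by
  set K := nsq v with hK
  have hK0 : 0 ≤ K := nsq_nonneg v
  apply ENNReal.rpow_le_rpow _ (by norm_num)
  rw [tsum_bump]
  set C : ℝ≥0∞ := ENNReal.ofReal ((1 + K) ^ s * 2 ^ (-|b|)) with hC
  calc C * 2 = ∫⁻ τ : ℝ, (Set.Icc (-1 - K) (1 - K)).indicator (fun _ => C) τ := by
        rw [lintegral_indicator measurableSet_Icc _, setLIntegral_const, vol2]
    _ ≤ _ := by
        apply lintegral_mono
        intro τ
        by_cases hτ : τ ∈ Set.Icc (-1 - K) (1 - K)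
        · have h : τ + K ∈ Set.Icc (-1:ℝ) 1 := by
            obtain ⟨h1, h2⟩ := hτ; constructor <;> linarith
          simp only [Set.indicator_of_mem hτ, ← hK, if_pos h, mul_one, hC]
          apply ENNReal.ofReal_le_ofReal
          exact mul_le_mul_of_nonneg_left (jb_lower h b) (Real.rpow_nonneg (by linarith) s)
        · simp only [Set.indicator_of_notMem hτ]
          exact zero_le

lemma Xnorm_mono (d : ℕ) (s b : ℝ) (F G : (Fin d → ℤ) × ℝ → ℝ≥0∞)
    (h : ∀ p, F p ≤ G p) : Xnorm d s b F ≤ Xnorm d s b G := by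
  apply ENNReal.rpow_le_rpow _ (by norm_num)
  apply ENNReal.tsum_le_tsum
  intro ξ
  apply lintegral_mono
  intro τ
  exact mul_le_mul_right (pow_le_pow_left' (h (ξ, τ)) 2) _

lemma part1 (d : ℕ) (n : ℕ) (p : (Fin d → ℤ) × ℝ) :
    (if p.1 = (n : ℤ) • (e₀ d + e₁ d) then 1 else 0) *
        (if p.2 + 2 * (n : ℝ) ^ 2 ∈ Set.Icc (-1 : ℝ) 1 then 1 else 0) ≤
      conv2 d (fex d n (e₀ d)) (fex d n (e₁ d)) p := by
  by_cases h1 : p.1 = (n : ℤ) • (e₀ d + e₁ d)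
  swap
  · rw [if_neg h1, zero_mul]; exact zero_le
  by_cases h2 : p.2 + 2 * (n : ℝ) ^ 2 ∈ Set.Icc (-1 : ℝ) 1
  swap
  · simp [h2]
  rw [if_pos h1, if_pos h2, mul_one]
  set a : ℝ := p.2 + 2 * (n : ℝ)^2 with ha
  obtain ⟨ha1, ha2⟩ := h2
  set K : ℝ := (n : ℝ)^2 with hKdef
  set c : ℝ := max (-1) (a - 1) - K with hc
  calc (1 : ℝ≥0∞) = ∫⁻ τ₁ : ℝ, (Set.Icc c (c+1)).indicator 1 τ₁ := by
        rw [lintegral_indicator_one measurableSet_Icc, Real.volume_Icc]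
        norm_num
    _ ≤ ∫⁻ τ₁ : ℝ, fex d n (e₀ d) ((n : ℤ) • e₀ d, τ₁) *
          fex d n (e₁ d) (p.1 - (n : ℤ) • e₀ d, p.2 - τ₁) := by
        apply lintegral_mono
        intro τ₁
        by_cases hτ : τ₁ ∈ Set.Icc c (c+1)
        swap
        · simp [Set.indicator_of_notMem hτ]
        rw [Set.indicator_of_mem hτ]
        obtain ⟨ht1, ht2⟩ := hτ
        have hp1 : p.1 - (n : ℤ) • e₀ d = (n : ℤ) • e₁ d := by
          rw [h1, smul_add]; abel
        have cond1 : τ₁ + (n:ℝ)^2 ∈ Set.Icc (-1:ℝ) 1 := by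
          constructor
          · have := le_max_left (-1:ℝ) (a-1); simp only [hc] at ht1; linarith
          · have h' : max (-1:ℝ) (a-1) ≤ 0 := max_le (by norm_num) (by linarith)
            simp only [hc] at ht2; linarith
        have cond2 : (p.2 - τ₁) + (n:ℝ)^2 ∈ Set.Icc (-1:ℝ) 1 := by
          have hub : max (-1:ℝ) (a-1) ≤ a := max_le (by linarith) (by linarith)
          have hlb : a - 1 ≤ max (-1:ℝ) (a-1) := le_max_right _ _
          have hp2 : p.2 = a - 2*K := by rw [ha]; ring
          constructor
          · simp only [hc] at ht2; rw [hp2]; simp only [hKdef] at *; linarith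
          · simp only [hc] at ht1; rw [hp2]; simp only [hKdef] at *; linarith
        simp only [fex, hp1]
        simp [cond1, cond2]
    _ ≤ conv2 d (fex d n (e₀ d)) (fex d n (e₁ d)) p :=
        ENNReal.le_tsum ((n : ℤ) • e₀ d)

lemma fex_eq_bump {d n : ℕ} {e : Fin d → ℤ} (h : nsq ((n:ℤ) • e) = ((n:ℕ) : ℝ)^2) :
    fex d n e = bump d ((n:ℤ) • e) := by
  funext p
  simp only [fex, bump]
  rw [h]

lemma bump_measurable (d : ℕ) (v : Fin d → ℤ) : Measurable (bump d v) := by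
  apply Measurable.mul
  · exact Measurable.ite (measurable_fst (measurableSet_singleton v)) measurable_const
      measurable_const
  · refine Measurable.ite ?_ measurable_const measurable_const
    exact (measurable_snd.add_const (nsq v)) measurableSet_Icc

lemma part2 (d : ℕ) (hd : 2 ≤ d) :
    ∀ s : ℝ, s < 0 → ∀ b b' : ℝ,
      ¬ ∃ c : ℝ, 0 < c ∧ ∀ F G : (Fin d → ℤ) × ℝ → ℝ≥0∞,
        Measurable F → Measurable G →
        Xnorm d s b' (conv2 d F G) ≤ ENNReal.ofReal c * Xnorm d s b F * Xnorm d s b G := by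
  intro s hs b b'
  rintro ⟨c, hc, hest⟩
  set K₂ : ℝ := 2 ^ |b| with hK₂
  set K₁ : ℝ := 2 ^ (-|b'|) with hK₁
  have hK₂0 : 0 < K₂ := Real.rpow_pos_of_pos two_pos _
  have hK₁0 : 0 < K₁ := Real.rpow_pos_of_pos two_pos _
  set D : ℝ := ((2:ℝ) ^ (s+1) * K₁) ^ ((1:ℝ)/2) with hD
  have hD0 : 0 < D := Real.rpow_pos_of_pos (by positivity) _
  set M : ℝ := (c * K₂ * 2) / D with hM
  set A : ℝ := max M 0 + 1 with hA
  have hA0 : 0 < A := by positivity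
  obtain ⟨n, hn⟩ := exists_nat_ge (A ^ (-2/s))
  set x : ℝ := 1 + (n:ℝ)^2 with hx
  have hx0 : (0:ℝ) < x := by positivity
  have hnx : (n:ℝ) ≤ x := by nlinarith [sq_nonneg ((n:ℝ) - 1)]
  have hxT : A ^ (-2/s) ≤ x := le_trans hn hnx
  have hxlarge : A ≤ x ^ (-(s/2)) := by
    have h1 : (A ^ (-2/s)) ^ (-(s/2)) = A := by
      rw [← Real.rpow_mul hA0.le, show (-2/s) * (-(s/2)) = 1 from by
        field_simp [hs.ne], Real.rpow_one]
    rw [← h1]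
    exact Real.rpow_le_rpow (Real.rpow_nonneg hA0.le _) hxT (by linarith)
  have hb0 : fex d n (e₀ d) = bump d ((n:ℤ) • e₀ d) :=
    fex_eq_bump (by rw [nsq_e₀ d (by omega)]; push_cast; ring)
  have hb1 : fex d n (e₁ d) = bump d ((n:ℤ) • e₁ d) :=
    fex_eq_bump (by rw [nsq_e₁ d hd]; push_cast; ring)
  have key := hest (fex d n (e₀ d)) (fex d n (e₁ d))
    (hb0 ▸ bump_measurable d _) (hb1 ▸ bump_measurable d _)
  have hlow : (ENNReal.ofReal ((1 + 2*(n:ℝ)^2) ^ s * K₁) * 2) ^ ((1:ℝ)/2) ≤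
      Xnorm d s b' (conv2 d (fex d n (e₀ d)) (fex d n (e₁ d))) := by
    have hmono' : Xnorm d s b' (bump d ((n:ℤ) • (e₀ d + e₁ d))) ≤
        Xnorm d s b' (conv2 d (fex d n (e₀ d)) (fex d n (e₁ d))) := by
      apply Xnorm_mono
      intro p
      refine le_trans (le_of_eq ?_) (part1 d n p)
      simp only [bump, nsq_sum d hd]
      push_cast
      ring_nf
    refine le_trans ?_ hmono'
    have := Xnorm_bump_ge d s b' ((n:ℤ) • (e₀ d + e₁ d))
    rwa [nsq_sum d hd, show ((n:ℤ):ℝ) = (n:ℝ) from by push_cast; ring] at this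
  have hup : Xnorm d s b (fex d n (e₀ d)) ≤
      (ENNReal.ofReal (x ^ s * K₂) * 2) ^ ((1:ℝ)/2) := by
    rw [hb0]
    have := Xnorm_bump_le d s b ((n:ℤ) • e₀ d)
    rwa [nsq_e₀ d (by omega), show ((n:ℤ):ℝ) = (n:ℝ) from by push_cast; ring] at this
  have hup1 : Xnorm d s b (fex d n (e₁ d)) ≤
      (ENNReal.ofReal (x ^ s * K₂) * 2) ^ ((1:ℝ)/2) := by
    rw [hb1]
    have := Xnorm_bump_le d s b ((n:ℤ) • e₁ d)
    rwa [nsq_e₁ d hd, show ((n:ℤ):ℝ) = (n:ℝ) from by push_cast; ring] at this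
  have chain : (ENNReal.ofReal ((1 + 2*(n:ℝ)^2) ^ s * K₁) * 2) ^ ((1:ℝ)/2) ≤
      ENNReal.ofReal c * (ENNReal.ofReal (x ^ s * K₂) * 2) := by
    calc _ ≤ Xnorm d s b' (conv2 d (fex d n (e₀ d)) (fex d n (e₁ d))) := hlow
      _ ≤ ENNReal.ofReal c * Xnorm d s b (fex d n (e₀ d)) * Xnorm d s b (fex d n (e₁ d)) := key
      _ ≤ ENNReal.ofReal c * (ENNReal.ofReal (x ^ s * K₂) * 2) ^ ((1:ℝ)/2) *
            (ENNReal.ofReal (x ^ s * K₂) * 2) ^ ((1:ℝ)/2) := by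
          exact mul_le_mul' (mul_le_mul' le_rfl hup) hup1
      _ = ENNReal.ofReal c * (ENNReal.ofReal (x ^ s * K₂) * 2) := by
          rw [mul_assoc, ← ENNReal.rpow_add_of_nonneg _ _ (by norm_num) (by norm_num)]
          norm_num
  have hL0 : (0:ℝ) < (1 + 2*(n:ℝ)^2) ^ s * K₁ * 2 := by
    have := Real.rpow_pos_of_pos (show (0:ℝ) < 1 + 2*(n:ℝ)^2 by positivity) s
    positivity
  have hreal : ((1 + 2*(n:ℝ)^2) ^ s * K₁ * 2) ^ ((1:ℝ)/2) ≤ c * (x ^ s * K₂ * 2) := by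
    rw [← ENNReal.ofReal_le_ofReal_iff (by positivity)]
    calc ENNReal.ofReal (((1 + 2*(n:ℝ)^2) ^ s * K₁ * 2) ^ ((1:ℝ)/2))
        = (ENNReal.ofReal ((1 + 2*(n:ℝ)^2) ^ s * K₁) * 2) ^ ((1:ℝ)/2) := by
          rw [← ENNReal.ofReal_rpow_of_pos hL0]
          congr 1
          rw [ENNReal.ofReal_mul (by positivity)]
          norm_num
      _ ≤ ENNReal.ofReal c * (ENNReal.ofReal (x ^ s * K₂) * 2) := chain
      _ = ENNReal.ofReal (c * (x ^ s * K₂ * 2)) := by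
          have hxs0' : (0:ℝ) ≤ x ^ s * K₂ := by positivity
          rw [show c * (x ^ s * K₂ * 2) = c * ((x ^ s * K₂) * 2) from by ring,
            ENNReal.ofReal_mul hc.le, ENNReal.ofReal_mul hxs0', ENNReal.ofReal_ofNat]
  have hxs0 : (0:ℝ) < x ^ s := Real.rpow_pos_of_pos hx0 s
  have hmono : ((2*x) ^ s * K₁ * 2) ^ ((1:ℝ)/2) ≤
      ((1 + 2*(n:ℝ)^2) ^ s * K₁ * 2) ^ ((1:ℝ)/2) := by
    apply Real.rpow_le_rpow (by positivity) _ (by norm_num)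
    have h2x : (1:ℝ) + 2*(n:ℝ)^2 ≤ 2*x := by rw [hx]; nlinarith
    have := Real.rpow_le_rpow_of_nonpos (by positivity) h2x hs.le
    nlinarith [this, hK₁0]
  have hfact : ((2*x) ^ s * K₁ * 2) ^ ((1:ℝ)/2) = D * x ^ (s * (1/2)) := by
    rw [Real.mul_rpow (by positivity) hx0.le]
    rw [show (2:ℝ)^s * x^s * K₁ * 2 = ((2:ℝ)^(s+1) * K₁) * x^s from by
      rw [Real.rpow_add two_pos, Real.rpow_one]; ring]
    rw [Real.mul_rpow (by positivity) hxs0.le, hD, ← Real.rpow_mul hx0.le]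
  have hfinal : D * x ^ (s * (1/2)) ≤ (c * K₂ * 2) * x ^ s := by
    calc D * x ^ (s * (1/2)) ≤ c * (x ^ s * K₂ * 2) := le_trans (hfact ▸ hmono) hreal
      _ = (c * K₂ * 2) * x ^ s := by ring
  have hdiv : x ^ (-(s/2)) ≤ M := by
    have hmul := mul_le_mul_of_nonneg_right hfinal (Real.rpow_nonneg hx0.le (-s))
    rw [mul_assoc, mul_assoc, ← Real.rpow_add hx0, ← Real.rpow_add hx0] at hmul
    rw [show s * (1/2) + -s = -(s/2) from by ring, show s + -s = (0:ℝ) from by ring,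
      Real.rpow_zero, mul_one] at hmul
    rw [hM, le_div_iff₀ hD0]
    linarith [hmul]
  have h1 : A ≤ M := le_trans hxlarge hdiv
  have h2 : M ≤ max M 0 := le_max_left M 0
  linarith

/-- In dimension `d ≥ 2` the periodic bilinear estimate
`‖u₁u₂‖_{X^+_{s,b'}} ≤ c ‖u₁‖_{X^+_{s,b}} ‖u₂‖_{X^+_{s,b}}` fails for every `s < 0` and all
`b, b'`. Concretely, the convolutions of `f₁^{(n)}, f₂^{(n)}` dominate
`δ_{ξ, n(e₀+e₁)} χ_{[-1,1]}(τ + 2n²)`, which forces `n^{-s}` to stay bounded. -/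
theorem periodic_bilinear_failure (d : ℕ) (hd : 2 ≤ d) :
    (∀ n : ℕ, ∀ p : (Fin d → ℤ) × ℝ,
      (if p.1 = (n : ℤ) • (e₀ d + e₁ d) then 1 else 0) *
          (if p.2 + 2 * (n : ℝ) ^ 2 ∈ Set.Icc (-1 : ℝ) 1 then 1 else 0) ≤
        conv2 d (fex d n (e₀ d)) (fex d n (e₁ d)) p) ∧
    ∀ s : ℝ, s < 0 → ∀ b b' : ℝ,
      ¬ ∃ c : ℝ, 0 < c ∧ ∀ F G : (Fin d → ℤ) × ℝ → ℝ≥0∞,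
        Measurable F → Measurable G →
        Xnorm d s b' (conv2 d F G) ≤ ENNReal.ofReal c * Xnorm d s b F * Xnorm d s b G :=
  ⟨fun n p => part1 d n p, part2 d hd⟩
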